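/- Let n ≥ 2. If [GAL_a^s] holds, then [GAL] holds. -/

import Mathlib

open Set Metric Filter

noncomputable section

/-- `E n` is `ℂⁿ` with the Euclidean norm. -/
abbrev E (n : ℕ) := EuclideanSpace ℂ (Fin n)

/-- A map is univalent on `D` if it is holomorphic and injective on `D`. -/
def Univalent {n : ℕ} (f : E n → E n) (D : Set (E n)) : Prop :=
  DifferentiableOn ℂ f D ∧ Set.InjOn f D

/-- The class `S` of normalized univalent maps of the unit ball. -/
def classS (n : ℕ) : Set (E n → E n) :=
  {f | Univalent f (ball 0 1) ∧ f 0 = 0 ∧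
    fderiv ℂ f 0 = ContinuousLinearMap.id ℂ (E n)}

/-- The class `S(ℂⁿ)` of normalized entire univalent maps. -/
def classSC (n : ℕ) : Set (E n → E n) :=
  {Ψ | Differentiable ℂ Ψ ∧ Function.Injective Ψ ∧ Ψ 0 = 0 ∧
    fderiv ℂ Ψ 0 = ContinuousLinearMap.id ℂ (E n)}

/-- A normalized Loewner chain on the unit ball. -/
def IsLoewnerChain {n : ℕ} (f : ℝ → E n → E n) : Prop :=
  ContinuousOn (fun p : ℝ × E n => f p.1 p.2) (Ici 0 ×ˢ ball 0 1) ∧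
  (∀ t, 0 ≤ t → Univalent (f t) (ball 0 1)) ∧
  (∀ s t, 0 ≤ s → s ≤ t → f s '' ball 0 1 ⊆ f t '' ball 0 1) ∧
  (∀ t, 0 ≤ t → f t 0 = 0 ∧
    fderiv ℂ (f t) 0 = (Real.exp t : ℂ) • ContinuousLinearMap.id ℂ (E n))

/-- The class `S¹` of maps embedding into a normalized Loewner chain. -/
def classS1 (n : ℕ) : Set (E n → E n) :=
  {f | f ∈ classS n ∧ ∃ F : ℝ → E n → E n, IsLoewnerChain F ∧
    Set.EqOn (F 0) f (ball 0 1)}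

/-- Uniform convergence on all compact subsets of `D`. -/
def ConvUnifOnCompacts {α β : Type*} [TopologicalSpace α] [UniformSpace β]
    (F : ℕ → α → β) (f : α → β) (D : Set α) : Prop :=
  ∀ K, K ⊆ D → IsCompact K → TendstoUniformlyOn F f atTop K

/-- `(D, Ω)` is a Runge pair. -/
def RungePair {n : ℕ} (D Ω : Set (E n)) : Prop :=
  D ⊆ Ω ∧ ∀ h : E n → ℂ, DifferentiableOn ℂ h D →
    ∃ g : ℕ → E n → ℂ, (∀ k, DifferentiableOn ℂ (g k) Ω) ∧
      ConvUnifOnCompacts g h D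

/-- `D` is Runge in `ℂⁿ`. -/
def IsRunge {n : ℕ} (D : Set (E n)) : Prop := RungePair D univ

/-- An automorphism of `ℂⁿ`. -/
def IsAutomorphism {n : ℕ} (Φ : E n → E n) : Prop :=
  Differentiable ℂ Φ ∧ Function.Bijective Φ

/-- A normalized automorphism of `ℂⁿ`. -/
def IsNormalizedAutomorphism {n : ℕ} (Φ : E n → E n) : Prop :=
  IsAutomorphism Φ ∧ Φ 0 = 0 ∧ fderiv ℂ Φ 0 = ContinuousLinearMap.id ℂ (E n)

/-- `Ω` is biholomorphic to `ℂⁿ`. -/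
def BiholToCn {n : ℕ} (Ω : Set (E n)) : Prop :=
  ∃ Ψ : E n → E n, Differentiable ℂ Ψ ∧ Function.Injective Ψ ∧ Set.range Ψ = Ω

/-- A Fatou–Bieberbach domain: a proper subdomain of `ℂⁿ` biholomorphic to `ℂⁿ`. -/
def IsFatouBieberbach {n : ℕ} (Ω : Set (E n)) : Prop :=
  Ω ≠ univ ∧ BiholToCn Ω

/-- The rescaling `f_r(z) = (1/r) f (r z)`. -/
def rescale {n : ℕ} (f : E n → E n) (r : ℝ) (z : E n) : E n :=
  (r : ℂ)⁻¹ • f ((r : ℂ) • z)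

/-- The Loewner range of a chain. -/
def LoewnerRange {n : ℕ} (f : ℝ → E n → E n) : Set (E n) :=
  ⋃ u ∈ Ici (0 : ℝ), f u '' ball 0 1

/-- (AL): the Andersén–Lempert approximation theorem for maps in `S` with Runge image. -/
def AL (n : ℕ) : Prop :=
  ∀ f ∈ classS n, IsRunge (f '' ball 0 1) →
    ∃ Φ : ℕ → E n → E n, (∀ k, IsNormalizedAutomorphism (Φ k)) ∧
      ConvUnifOnCompacts Φ f (ball (0 : E n) 1)

/-- (AL'): every univalent map of the ball with Runge image is approximable by
automorphisms of `ℂⁿ`. -/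
def AL' (n : ℕ) : Prop :=
  ∀ g : E n → E n, Univalent g (ball 0 1) → IsRunge (g '' ball 0 1) →
    ∃ Φ : ℕ → E n → E n, (∀ k, IsAutomorphism (Φ k)) ∧
      ConvUnifOnCompacts Φ g (ball (0 : E n) 1)

/-- (AL-nec): a map in `S` approximable by automorphisms of `ℂⁿ` has Runge image. -/
def ALnec (n : ℕ) : Prop :=
  ∀ f ∈ classS n,
    (∃ Φ : ℕ → E n → E n, (∀ k, IsAutomorphism (Φ k)) ∧
      ConvUnifOnCompacts Φ f (ball (0 : E n) 1)) →
    IsRunge (f '' ball 0 1)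

/-- [GAL]: every `f ∈ S` with non-Runge image is approximable by entire univalent maps. -/
def GAL (n : ℕ) : Prop :=
  ∀ f ∈ classS n, ¬ IsRunge (f '' ball 0 1) →
    ∃ Ψ : ℕ → E n → E n, (∀ k, Differentiable ℂ (Ψ k) ∧ Function.Injective (Ψ k)) ∧
      ConvUnifOnCompacts Ψ f (ball (0 : E n) 1)

/-- [EXT]: every `f ∈ S` extending univalently past the closed ball is in `S¹`. -/
def EXT (n : ℕ) : Prop :=
  ∀ f ∈ classS n,
    (∃ r > (1 : ℝ), ∃ F : E n → E n, Univalent F (ball 0 r) ∧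
      Set.EqOn F f (ball 0 1)) →
    f ∈ classS1 n

/-- [FBR]: every domain biholomorphic to the ball and not Runge in `ℂⁿ` sits in a
Fatou–Bieberbach domain in a Runge way. -/
def FBR (n : ℕ) : Prop :=
  ∀ D : Set (E n), IsOpen D →
    (∃ g : E n → E n, Univalent g (ball 0 1) ∧ g '' ball 0 1 = D) →
    ¬ IsRunge D →
    ∃ Ω : Set (E n), IsFatouBieberbach Ω ∧ D ⊆ Ω ∧ RungePair D Ω

/-- [GALˢ]: strong generalized Andersén–Lempert. -/
def GALs (n : ℕ) : Prop :=
  ∀ f ∈ classS n, ¬ IsRunge (f '' ball 0 1) →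
    ∃ Ω : Set (E n), IsFatouBieberbach Ω ∧
      ∃ Ψ : ℕ → E n → E n, (∀ k, Ψ k ∈ classSC n ∧ Set.range (Ψ k) = Ω) ∧
        ConvUnifOnCompacts Ψ f (ball (0 : E n) 1)

/-- [FBRₐ]. -/
def FBRa (n : ℕ) : Prop :=
  ∀ f ∈ classS n, ∀ r ∈ Ioo (0 : ℝ) 1,
    ∃ Ω : Set (E n), BiholToCn Ω ∧ f '' ball 0 r ⊆ Ω ∧
      RungePair (f '' ball 0 r) Ω

/-- [GALₐˢ]. -/
def GALas (n : ℕ) : Prop :=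
  ∀ f ∈ classS n, ¬ IsRunge (f '' ball 0 1) → ∀ r ∈ Ioo (0 : ℝ) 1,
    ∃ Ω : Set (E n), IsFatouBieberbach Ω ∧
      ∃ Ψ : ℕ → E n → E n, (∀ k, Ψ k ∈ classSC n ∧ Set.range (Ψ k) = Ω) ∧
        ConvUnifOnCompacts Ψ (rescale f r) (ball (0 : E n) 1)

/-- A domain is entire-convexshapelike if some entire univalent map pulls it back to
a convex set. -/
def EntireConvexshapelike {n : ℕ} (Ω : Set (E n)) : Prop :=
  ∃ Ψ : E n → E n, Differentiable ℂ Ψ ∧ Function.Injective Ψ ∧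
    Ω ⊆ Set.range Ψ ∧ Convex ℝ (Ψ ⁻¹' Ω)

/-- `S¹` is dense in `S` for uniform convergence on compacta. -/
def DenseS1 (n : ℕ) : Prop :=
  ∀ f ∈ classS n, ∃ g : ℕ → E n → E n, (∀ k, g k ∈ classS1 n) ∧
    ConvUnifOnCompacts g f (ball (0 : E n) 1)
lemma rescale_close {n : ℕ} {f : E n → E n} (hf : ContinuousOn f (ball 0 1))
    {ρ : ℝ} (hρ : ρ < 1) {ε : ℝ} (hε : 0 < ε) :
    ∃ r ∈ Ioo (0:ℝ) 1, ∀ z ∈ closedBall (0:E n) ρ, dist (rescale f r z) (f z) < ε := by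
  set T : Set (ℝ × E n) := Icc (1/2) 1 ×ˢ closedBall 0 ρ with hT
  have hTc : IsCompact T := isCompact_Icc.prod (isCompact_closedBall _ _)
  have hmap : ∀ p ∈ T, (p.1 : ℂ) • p.2 ∈ ball (0:E n) 1 := by
    rintro ⟨a, z⟩ ⟨ha, hz⟩
    simp only [mem_ball, dist_zero_right] at *
    rw [mem_closedBall, dist_zero_right] at hz
    have h1 : ‖((a:ℂ)) • z‖ = ‖(a:ℂ)‖ * ‖z‖ := norm_smul _ _
    have h2 : ‖(a:ℂ)‖ = |a| := by simp
    have h3 : |a| ≤ 1 := by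
      rw [abs_le]; exact ⟨by linarith [ha.1], ha.2⟩
    calc ‖((a:ℂ)) • z‖ = |a| * ‖z‖ := by rw [h1, h2]
      _ ≤ 1 * ‖z‖ := by
          exact mul_le_mul_of_nonneg_right h3 (norm_nonneg _)
      _ = ‖z‖ := one_mul _
      _ ≤ ρ := hz
      _ < 1 := hρ
  have hG : ContinuousOn (fun p : ℝ × E n => rescale f p.1 p.2) T := by
    have hc1 : ContinuousOn (fun p : ℝ × E n => ((p.1 : ℂ))⁻¹) T := by
      apply ContinuousOn.inv₀
      · exact (Complex.continuous_ofReal.comp continuous_fst).continuousOn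
      · rintro ⟨a, z⟩ ⟨ha, _⟩
        simp only [ne_eq, Complex.ofReal_eq_zero]
        intro h; rw [h] at ha; norm_num at ha
    have hsc : ContinuousOn (fun p : ℝ × E n => ((p.1 : ℂ)) • p.2) T :=
      ((Complex.continuous_ofReal.comp continuous_fst).smul continuous_snd).continuousOn
    have hc2 : ContinuousOn (fun p : ℝ × E n => f (((p.1 : ℂ)) • p.2)) T :=
      hf.comp hsc hmap
    exact hc1.smul hc2
  have hUC := hTc.uniformContinuousOn_of_continuous hG
  rw [Metric.uniformContinuousOn_iff] at hUC
  obtain ⟨δ, hδ, hδ'⟩ := hUC ε hε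
  set d := min δ 1 with hd
  have hd0 : 0 < d := lt_min hδ one_pos
  have hd1 : d ≤ 1 := min_le_right _ _
  refine ⟨1 - d/4, ⟨by linarith, by linarith⟩, ?_⟩
  intro z hz
  have hrT : ((1 - d/4 : ℝ), z) ∈ T := ⟨⟨by linarith, by linarith⟩, hz⟩
  have h1T : ((1 : ℝ), z) ∈ T := ⟨⟨by norm_num, le_refl _⟩, hz⟩
  have hdist : dist ((1 - d/4 : ℝ), z) ((1 : ℝ), z) < δ := by
    rw [Prod.dist_eq]
    simp only [dist_self]
    rw [max_eq_left dist_nonneg, Real.dist_eq]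
    have : |1 - d/4 - 1| = d/4 := by
      rw [show (1 - d/4 - 1 : ℝ) = -(d/4) by ring, abs_neg, abs_of_pos (by linarith)]
    rw [this]
    have : d ≤ δ := min_le_left _ _
    linarith
  have := hδ' _ hrT _ h1T hdist
  simpa [rescale] using this

/-- [GALₐˢ] implies [GAL]. -/
theorem stmt9 (n : ℕ) (hn : 2 ≤ n) (hGALas : GALas n) : GAL n := by
  intro f hfS hfR
  have hfc : ContinuousOn f (ball 0 1) := hfS.1.1.continuousOn
  -- Step 1: for each m, choose r m with rescale f (r m) close to f on closedBall 0 (1 - 1/(m+1))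
  have hpos : ∀ m : ℕ, (0:ℝ) < 1/(m+1) := by
    intro m; positivity
  have H1 : ∀ m : ℕ, ∃ r ∈ Ioo (0:ℝ) 1,
      ∀ z ∈ closedBall (0:E n) (1 - 1/(m+1)), dist (rescale f r z) (f z) < 1/(m+1) := by
    intro m
    exact rescale_close hfc (by linarith [hpos m]) (hpos m)
  choose r hr hrdist using H1
  -- Step 2: for each m, pick an entire univalent map close to rescale f (r m)
  have H2 : ∀ m : ℕ, ∃ Φ : E n → E n, (Differentiable ℂ Φ ∧ Function.Injective Φ) ∧
      ∀ z ∈ closedBall (0:E n) (1 - 1/(m+1)), dist (Φ z) (rescale f (r m) z) < 1/(m+1) := by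
    intro m
    obtain ⟨Ω, _, Ψ, hΨ, hconv⟩ := hGALas f hfS hfR (r m) (hr m)
    have hKsub : closedBall (0:E n) (1 - 1/(m+1)) ⊆ ball 0 1 :=
      closedBall_subset_ball (by linarith [hpos m])
    have htu := hconv _ hKsub (isCompact_closedBall _ _)
    rw [Metric.tendstoUniformlyOn_iff] at htu
    obtain ⟨k, hk⟩ := (htu _ (hpos m)).exists
    refine ⟨Ψ k, ⟨(hΨ k).1.1, (hΨ k).1.2.1⟩, fun z hz => ?_⟩
    rw [dist_comm]
    exact hk z hz
  choose Φ hΦ1 hΦ2 using H2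
  refine ⟨Φ, fun m => hΦ1 m, ?_⟩
  -- Step 3: convergence on compacts
  intro K hKsub hKc
  rw [Metric.tendstoUniformlyOn_iff]
  intro ε hε
  rcases K.eq_empty_or_nonempty with hKe | hKne
  · filter_upwards with m x hx
    rw [hKe] at hx; exact absurd hx (notMem_empty x)
  obtain ⟨x₀, hx₀K, hx₀'⟩ := hKc.exists_isMaxOn hKne continuous_norm.continuousOn
  set ρ := ‖x₀‖ with hρdef
  have hx₀ : ∀ x ∈ K, ‖x‖ ≤ ρ := fun x hx => hx₀' hx
  have hρ1 : ρ < 1 := by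
    have := hKsub hx₀K
    rwa [mem_ball, dist_zero_right] at this
  have hρ0 : 0 ≤ ρ := norm_nonneg _
  obtain ⟨N₁, hN₁⟩ := exists_nat_gt (1/(1-ρ))
  obtain ⟨N₂, hN₂⟩ := exists_nat_gt (2/ε)
  filter_upwards [eventually_ge_atTop (max N₁ N₂)] with m hm
  intro x hxK
  have hm1 : (N₁ : ℝ) ≤ m := Nat.cast_le.mpr (le_trans (le_max_left _ _) hm)
  have hm2 : (N₂ : ℝ) ≤ m := Nat.cast_le.mpr (le_trans (le_max_right _ _) hm)
  have hx1 : x ∈ closedBall (0:E n) (1 - 1/(m+1)) := by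
    rw [mem_closedBall, dist_zero_right]
    have hxρ : ‖x‖ ≤ ρ := hx₀ x hxK
    have h1ρ : 0 < 1 - ρ := by linarith
    have : 1/((m:ℝ)+1) < 1 - ρ := by
      rw [div_lt_iff₀ (by positivity)]
      rw [div_lt_iff₀ h1ρ] at hN₁
      calc (1:ℝ) < N₁ * (1-ρ) := hN₁
        _ ≤ (1-ρ) * ((m:ℝ)+1) := by nlinarith
    linarith
  have hd1 := hrdist m x hx1
  have hd2 := hΦ2 m x hx1
  have hsmall : 1/((m:ℝ)+1) < ε/2 := by
    rw [div_lt_div_iff₀ (by positivity) (by norm_num : (0:ℝ) < 2)]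
    have h2 : 2 < (N₂:ℝ) * ε := (div_lt_iff₀ hε).mp hN₂
    have h3 : (N₂:ℝ) * ε ≤ (m:ℝ) * ε := mul_le_mul_of_nonneg_right hm2 hε.le
    nlinarith [h2, h3, hε]
  calc dist (f x) (Φ m x) ≤ dist (f x) (rescale f (r m) x) + dist (rescale f (r m) x) (Φ m x) :=
        dist_triangle _ _ _
    _ < 1/(m+1) + 1/(m+1) := by
        rw [dist_comm (f x) (rescale f (r m) x), dist_comm (rescale f (r m) x) (Φ m x)]
        exact add_lt_add hd1 hd2
    _ < ε/2 + ε/2 := add_lt_add hsmall hsmall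
    _ = ε := by ring
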